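/- If a n = ∏_{d ∣ n} c d for all n ≥ 1 with all values positive, then for all m, n ≥ 1, the product a 1 · a 2 ⋯ a n divides the product a (m+1) · a (m+2) ⋯ a (m+n). -/

import Mathlib

open Finset

lemma key_prod (c : ℕ → ℕ) (N : ℕ) :
    ∏ i ∈ Finset.Icc 1 N, ∏ d ∈ i.divisors, c d
      = ∏ d ∈ Finset.Icc 1 N, c d ^ (N / d) := by
  have h1 : ∀ i ∈ Finset.Icc 1 N,
      ∏ d ∈ i.divisors, c d = ∏ d ∈ (Finset.Icc 1 N).filter (· ∣ i), c d := by
    intro i hi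
    simp only [Finset.mem_Icc] at hi
    congr 1
    ext d
    simp only [Nat.mem_divisors, Finset.mem_filter, Finset.mem_Icc]
    constructor
    · rintro ⟨hd, hi0⟩
      refine ⟨⟨?_, le_trans (Nat.le_of_dvd (by omega) hd) hi.2⟩, hd⟩
      rcases Nat.eq_zero_or_pos d with h | h
      · subst h; exact absurd (Nat.eq_zero_of_zero_dvd hd) (by omega)
      · exact h
    · rintro ⟨_, hd⟩; exact ⟨hd, by omega⟩
  rw [Finset.prod_congr rfl h1]
  simp_rw [Finset.prod_filter]
  rw [Finset.prod_comm]
  refine Finset.prod_congr rfl fun d hd => ?_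
  rw [← Finset.prod_filter, Finset.prod_const]
  congr 1
  have : Finset.Icc 1 N = Finset.Ioc 0 N := rfl
  rw [this]
  exact Nat.Ioc_filter_dvd_card_eq_div N d

lemma extend_prod (c : ℕ → ℕ) (n N : ℕ) (h : n ≤ N) :
    ∏ d ∈ Finset.Icc 1 n, c d ^ (n / d) = ∏ d ∈ Finset.Icc 1 N, c d ^ (n / d) := by
  refine Finset.prod_subset (Finset.Icc_subset_Icc_right h) fun d hd hnd => ?_
  simp only [Finset.mem_Icc] at hd hnd
  rw [Nat.div_eq_of_lt (by omega)]; rfl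

theorem prod_first_dvd_consecutive (a c : ℕ → ℕ)
    (hc : ∀ n, 1 ≤ n → 0 < c n)
    (ha : ∀ n, 1 ≤ n → a n = ∏ d ∈ n.divisors, c d) :
    ∀ m n, 1 ≤ m → 1 ≤ n →
      (∏ i ∈ Finset.Icc 1 n, a i) ∣ ∏ i ∈ Finset.Icc 1 n, a (m + i) := by
  intro m n hm hn
  have haP : ∀ k : ℕ, ∏ i ∈ Finset.Icc 1 k, a i = ∏ d ∈ Finset.Icc 1 k, c d ^ (k / d) := by
    intro k
    rw [← key_prod]
    exact Finset.prod_congr rfl fun i hi => ha i (Finset.mem_Icc.mp hi).1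
  -- split: ∏_{Icc 1 (m+n)} a = ∏_{Icc 1 m} a * ∏_{Icc 1 n} a (m+i)
  have hsplit : (∏ i ∈ Finset.Icc 1 m, a i) * (∏ i ∈ Finset.Icc 1 n, a (m + i))
      = ∏ i ∈ Finset.Icc 1 (m + n), a i := by
    rw [show Finset.Icc 1 (m + n) = Finset.Icc 1 m ∪ Finset.Icc (m + 1) (m + n) by
      ext x; simp [Finset.mem_Icc, Finset.mem_union]; omega]
    rw [Finset.prod_union (by
      rw [Finset.disjoint_left]; intro x hx hx'
      simp only [Finset.mem_Icc] at hx hx'; omega)]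
    congr 1
    rw [show Finset.Icc (m+1) (m+n) = (Finset.Icc 1 n).map ⟨(m + ·), add_right_injective m⟩ by
      ext x; simp [Finset.mem_Icc, Finset.mem_map]; constructor
      · intro h; exact ⟨x - m, by omega, by omega⟩
      · rintro ⟨y, hy, rfl⟩; show m+1 ≤ m+y ∧ m+y ≤ m+n; omega]
    rw [Finset.prod_map]
    rfl
  have hPmpos : 0 < ∏ i ∈ Finset.Icc 1 m, a i := by
    refine Finset.prod_pos fun i hi => ?_
    have hi1 := (Finset.mem_Icc.mp hi).1
    rw [ha i hi1]
    refine Finset.prod_pos fun d hd => ?_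
    rcases Nat.mem_divisors.mp hd with ⟨hdvd, hi0⟩
    exact hc d (Nat.one_le_iff_ne_zero.mpr (by rintro rfl; exact hi0 (Nat.eq_zero_of_zero_dvd hdvd)))
  rw [← Nat.mul_dvd_mul_iff_left hPmpos, hsplit, haP, haP, haP]
  rw [extend_prod c m (m + n) (by omega), extend_prod c n (m + n) (by omega),
    ← Finset.prod_mul_distrib]
  refine Finset.prod_dvd_prod_of_dvd _ _ fun d hd => ?_
  have hd1 := (Finset.mem_Icc.mp hd).1
  rw [← pow_add]
  apply pow_dvd_pow
  rw [Nat.le_div_iff_mul_le (by omega : 0 < d), add_mul]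
  calc m / d * d + n / d * d ≤ m + n := by
        exact Nat.add_le_add (Nat.div_mul_le_self m d) (Nat.div_mul_le_self n d)
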